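/- Let G be the complete graph on p ≥ 3 vertices with one edge removed. Then the number of moral acyclic orientations of G equals 2·(p−1)! − (p−2)!. -/

import Mathlib

/-- A chord of a closed walk: an edge of `G` between two vertices of the walk
that is not an edge of the walk. -/
def SimpleGraph.Walk.HasChord {V : Type*} {G : SimpleGraph V} {v : V}
    (c : G.Walk v v) : Prop :=
  ∃ a b, a ∈ c.support ∧ b ∈ c.support ∧ G.Adj a b ∧ s(a, b) ∉ c.edges

/-- A graph is chordal if every cycle with four or more vertices has a chord. -/
def SimpleGraph.IsChordalGraph {V : Type*} (G : SimpleGraph V) : Prop :=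
  ∀ (v : V) (c : G.Walk v v), c.IsCycle → 4 ≤ c.length → c.HasChord

/-- A vertex is dominating if it is adjacent to every other vertex. -/
def SimpleGraph.IsDominatingVertex {V : Type*} (G : SimpleGraph V) (v : V) : Prop :=
  ∀ w, w ≠ v → G.Adj v w

/-- `D` is an orientation of `G`: each edge gets exactly one direction. -/
def SimpleGraph.IsOrientation {V : Type*} (G : SimpleGraph V) (D : V → V → Prop) : Prop :=
  (∀ a b, G.Adj a b ↔ (D a b ∨ D b a)) ∧ ∀ a b, ¬(D a b ∧ D b a)

/-- An orientation (directed relation) is acyclic if it has no directed cycle. -/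
def IsAcyclicRel {V : Type*} (D : V → V → Prop) : Prop :=
  ∀ a, ¬ Relation.TransGen D a a

/-- An orientation is moral (w.r.t. `G`) if it contains no v-structure. -/
def SimpleGraph.IsMoralOrient {V : Type*} (G : SimpleGraph V) (D : V → V → Prop) : Prop :=
  ∀ a b c, D a c → D b c → a ≠ b → G.Adj a b

/-- The number of moral acyclic orientations of `G`. -/
noncomputable def moralAcyclicCount {V : Type*} (G : SimpleGraph V) : ℕ :=
  Set.ncard {D : V → V → Prop |
    G.IsOrientation D ∧ IsAcyclicRel D ∧ G.IsMoralOrient D}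

/-- Join of two graphs: all edges of each plus all edges across. -/
def joinGraph {V1 V2 : Type*} (G1 : SimpleGraph V1) (G2 : SimpleGraph V2) :
    SimpleGraph (V1 ⊕ V2) where
  Adj x y := match x, y with
    | .inl a, .inl b => G1.Adj a b
    | .inr a, .inr b => G2.Adj a b
    | .inl _, .inr _ => True
    | .inr _, .inl _ => True
  symm := ⟨by rintro (a | a) (b | b) h <;> simp_all [SimpleGraph.adj_comm]⟩
  loopless := ⟨by rintro (a | a) h <;> simp_all⟩

/-- Disjoint union of two graphs. -/
def sumGraph {V1 V2 : Type*} (G1 : SimpleGraph V1) (G2 : SimpleGraph V2) :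
    SimpleGraph (V1 ⊕ V2) where
  Adj x y := match x, y with
    | .inl a, .inl b => G1.Adj a b
    | .inr a, .inr b => G2.Adj a b
    | _, _ => False
  symm := ⟨by rintro (a | a) (b | b) h <;> simp_all [SimpleGraph.adj_comm]⟩
  loopless := ⟨by rintro (a | a) h <;> simp_all⟩



open Equiv Finset

section Helpers

variable {α : Type*}

lemma exists_orderMap [Fintype α] {n : ℕ} (hc : Fintype.card α = n)
    (r : α → α → Prop) (hirr : ∀ x, ¬ r x x)
    (htr : ∀ x y z, r x y → r y z → r x z)
    (htot : ∀ x y, x ≠ y → r x y ∨ r y x) :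
    ∃ σ : α → Fin n, Function.Bijective σ ∧ ∀ x y, r x y ↔ σ x < σ y := by
  classical
  haveI : IsStrictTotalOrder α r :=
    { trichotomous := fun x y => by
        by_cases h : x = y
        · exact fun _ _ => h
        · rcases htot x y h with h' | h'
          · exact fun h1 _ => absurd h' h1
          · exact fun _ h2 => absurd h' h2
      irrefl := hirr
      trans := htr }
  letI lo : LinearOrder α := linearOrderOfSTO r
  let e := monoEquivOfFin α hc
  refine ⟨e.symm, e.symm.toEquiv.bijective, fun x y => ?_⟩
  exact (OrderIso.lt_iff_lt e.symm).symm

lemma card_perm_one [Fintype α] [DecidableEq α] (x y : α) :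
    Fintype.card {σ : Equiv.Perm α // σ x = y} = (Fintype.card α - 1).factorial := by
  classical
  let e₀ : (({x} : Set α)) ≃ (({y} : Set α)) := Equiv.ofUnique _ _
  have h₁ : {σ : Equiv.Perm α // σ x = y} ≃
      {e : α ≃ α // ∀ z : ({x} : Set α), e z = e₀ z} := by
    refine Equiv.subtypeEquivRight fun σ => ?_
    constructor
    · intro h z
      have hz : (z : α) = x := z.2
      have h2 : ((e₀ z : ({y} : Set α)) : α) = y := (e₀ z).2
      rw [hz, h, h2]
    · intro h
      have h2 : ((e₀ ⟨x, rfl⟩ : ({y} : Set α)) : α) = y := (e₀ ⟨x, rfl⟩).2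
      exact (h ⟨x, rfl⟩).trans h2
  have h2 := (Equiv.Set.compl e₀)
  have hcard : Fintype.card (({x}ᶜ : Set α)) = Fintype.card α - 1 := by
    rw [Fintype.card_compl_set]
    simp
  have hcard' : Fintype.card (({y}ᶜ : Set α)) = Fintype.card α - 1 := by
    rw [Fintype.card_compl_set]
    simp
  rw [Fintype.card_congr (h₁.trans h2), Fintype.card_equiv
    (Fintype.equivOfCardEq (hcard.trans hcard'.symm)), hcard]

lemma card_perm_two [Fintype α] [DecidableEq α] {x₁ x₂ y₁ y₂ : α} (hx : x₁ ≠ x₂)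
    (hy : y₁ ≠ y₂) :
    Fintype.card {σ : Equiv.Perm α // σ x₁ = y₁ ∧ σ x₂ = y₂}
      = (Fintype.card α - 2).factorial := by
  classical
  let e₀ : (({x₁, x₂} : Set α)) ≃ (({y₁, y₂} : Set α)) :=
    { toFun := fun z => if (z : α) = x₁ then ⟨y₁, by simp⟩ else ⟨y₂, by simp⟩
      invFun := fun w => if (w : α) = y₁ then ⟨x₁, by simp⟩ else ⟨x₂, by simp⟩
      left_inv := by
        rintro ⟨z, hz⟩
        simp only [Set.mem_insert_iff, Set.mem_singleton_iff] at hz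
        rcases hz with rfl | rfl
        · simp
        · simp [hx.symm, hy.symm]
      right_inv := by
        rintro ⟨w, hw⟩
        simp only [Set.mem_insert_iff, Set.mem_singleton_iff] at hw
        rcases hw with rfl | rfl
        · simp
        · simp [hx.symm, hy.symm] }
  have he₁ : ((e₀ ⟨x₁, by simp⟩ : (({y₁, y₂} : Set α))) : α) = y₁ := by simp [e₀]
  have he₂ : ((e₀ ⟨x₂, by simp⟩ : (({y₁, y₂} : Set α))) : α) = y₂ := by
    simp [e₀, hx.symm]
  have h₁ : {σ : Equiv.Perm α // σ x₁ = y₁ ∧ σ x₂ = y₂} ≃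
      {e : α ≃ α // ∀ z : ({x₁, x₂} : Set α), e z = e₀ z} := by
    refine Equiv.subtypeEquivRight fun σ => ?_
    constructor
    · rintro ⟨hσ₁, hσ₂⟩ ⟨z, hz⟩
      simp only [Set.mem_insert_iff, Set.mem_singleton_iff] at hz
      rcases hz with rfl | rfl
      · simpa [e₀] using hσ₁
      · simpa [e₀, hx.symm] using hσ₂
    · intro h
      constructor
      · exact (h ⟨x₁, by simp⟩).trans he₁
      · exact (h ⟨x₂, by simp⟩).trans he₂
  have h2 := (Equiv.Set.compl e₀)
  have hpair : ∀ (u v : α), u ≠ v →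
      Fintype.card (({u, v} : Set α)) = 2 := by
    intro u v huv
    rw [← Set.toFinset_card]
    simp [huv]
  have hcard : Fintype.card (({x₁, x₂}ᶜ : Set α)) = Fintype.card α - 2 := by
    rw [Fintype.card_compl_set, hpair _ _ hx]
  have hcard' : Fintype.card (({y₁, y₂}ᶜ : Set α)) = Fintype.card α - 2 := by
    rw [Fintype.card_compl_set, hpair _ _ hy]
  rw [Fintype.card_congr (h₁.trans h2), Fintype.card_equiv
    (Fintype.equivOfCardEq (hcard.trans hcard'.symm)), hcard]

end Helpers

lemma build_perm {p : ℕ} (hp : 1 ≤ p) (D : Fin p → Fin p → Prop)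
    (hac : IsAcyclicRel D) (v : Fin p) (hv : ∀ y, ¬ D v y)
    (htot : ∀ x y, x ≠ y → x ≠ v → y ≠ v → D x y ∨ D y x) :
    ∃ σ : Equiv.Perm (Fin p), (∀ x y, D x y → σ x < σ y) ∧ σ v = ⟨p - 1, by omega⟩ := by
  classical
  let L : Fin p → Fin p → Prop := fun x y => D x y ∨ (x ≠ v ∧ y = v)
  have hTD : ∀ y, ¬ Relation.TransGen D v y := by
    intro y h
    induction h with
    | single h => exact hv _ h
    | tail _ _ ih => exact ih
  have key : ∀ x y, Relation.TransGen L x y →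
      (y = v ∧ x ≠ v) ∨ Relation.TransGen D x y := by
    intro x y h
    induction h with
    | single h =>
      rcases h with h | ⟨hx, rfl⟩
      · exact Or.inr (.single h)
      · exact Or.inl ⟨rfl, hx⟩
    | tail hxc hcy ih =>
      rcases ih with ⟨rfl, hx⟩ | hTxc
      · rcases hcy with h | ⟨hc, rfl⟩
        · exact absurd h (hv _)
        · exact absurd rfl hc
      · rcases hcy with h | ⟨hc, rfl⟩
        · exact Or.inr (hTxc.tail h)
        · refine Or.inl ⟨rfl, fun hxv => ?_⟩
          exact hTD _ (hxv ▸ hTxc)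
  have hirr : ∀ x, ¬ Relation.TransGen L x x := by
    intro x h
    rcases key x x h with ⟨rfl, hx⟩ | h'
    · exact hx rfl
    · exact hac x h'
  have htot' : ∀ x y, x ≠ y → Relation.TransGen L x y ∨ Relation.TransGen L y x := by
    intro x y hxy
    by_cases hyv : y = v
    · subst hyv
      exact Or.inl (.single (Or.inr ⟨hxy, rfl⟩))
    · by_cases hxv : x = v
      · subst hxv
        exact Or.inr (.single (Or.inr ⟨hyv, rfl⟩))
      · rcases htot x y hxy hxv hyv with h | h
        · exact Or.inl (.single (Or.inl h))
        · exact Or.inr (.single (Or.inl h))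
  obtain ⟨σf, hbij, hord⟩ := exists_orderMap (Fintype.card_fin p) (Relation.TransGen L)
    hirr (fun x y z h1 h2 => h1.trans h2) htot'
  refine ⟨Equiv.ofBijective σf hbij, fun x y h => (hord x y).mp (.single (Or.inl h)), ?_⟩
  have hmax' : ∀ x, x ≠ v → σf x < σf v :=
    fun x hx => (hord x v).mp (.single (Or.inr ⟨hx, rfl⟩))
  obtain ⟨x, hx⟩ := hbij.2 ⟨p - 1, by omega⟩
  show σf v = ⟨p - 1, by omega⟩
  by_cases hxv : x = v
  · rw [← hxv]
    exact hx
  · exfalso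
    have h1 := hmax' x hxv
    rw [hx] at h1
    have h2 := (σf v).2
    rw [Fin.lt_def] at h1
    simp only at h1
    omega

theorem count_complete_minus_one_edge (p : ℕ) (hp : 3 ≤ p) (a b : Fin p)
    (hab : a ≠ b) :
    moralAcyclicCount ((⊤ : SimpleGraph (Fin p)) \ SimpleGraph.fromEdgeSet {s(a, b)})
      = 2 * Nat.factorial (p - 1) - Nat.factorial (p - 2) := by
  classical
  set G : SimpleGraph (Fin p) :=
    (⊤ : SimpleGraph (Fin p)) \ SimpleGraph.fromEdgeSet {s(a, b)} with hGdef
  have hGadj : ∀ x y : Fin p,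
      G.Adj x y ↔ (x ≠ y ∧ ¬(x = a ∧ y = b) ∧ ¬(x = b ∧ y = a)) := by
    intro x y
    simp only [hGdef, SimpleGraph.sdiff_adj, SimpleGraph.top_adj,
      SimpleGraph.fromEdgeSet_adj, Set.mem_singleton_iff, Sym2.eq_iff]
    tauto
  have hnadj : ¬ G.Adj a b := by
    rw [hGadj]
    tauto
  let lastF : Fin p := ⟨p - 1, by omega⟩
  let secF : Fin p := ⟨p - 2, by omega⟩
  have hls : secF ≠ lastF := by
    intro h
    have := congrArg Fin.val h
    simp only [lastF, secF] at this
    omega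
  have hmax : ∀ k : Fin p, k ≤ lastF := by
    intro k
    have := k.2
    rw [Fin.le_def]
    simp only [lastF]
    omega
  let f : Equiv.Perm (Fin p) → (Fin p → Fin p → Prop) :=
    fun σ x y => G.Adj x y ∧ σ x < σ y
  let T : Set (Equiv.Perm (Fin p)) :=
    {σ | σ b = lastF ∨ (σ a = lastF ∧ σ b ≠ secF)}
  -- image of T is exactly the set of moral acyclic orientations
  have hST : {D : Fin p → Fin p → Prop |
      G.IsOrientation D ∧ IsAcyclicRel D ∧ G.IsMoralOrient D} = f '' T := by
    ext D
    simp only [Set.mem_setOf_eq, Set.mem_image]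
    constructor
    · rintro ⟨⟨hor1, hor2⟩, hac, hmor⟩
      have hDirr : ∀ x, ¬ D x x := fun x h => hac x (Relation.TransGen.single h)
      have hDne : ∀ x y, D x y → x ≠ y := by
        intro x y h heq
        exact hDirr y (heq ▸ h)
      have hDab : ¬ D a b := fun h => hnadj ((hor1 a b).mpr (Or.inl h))
      have hDba : ¬ D b a := fun h => hnadj ((hor1 a b).mpr (Or.inr h))
      have hDadj : ∀ x y, D x y → G.Adj x y := fun x y h => (hor1 x y).mpr (Or.inl h)
      have htot : ∀ x y, x ≠ y → ¬(x = a ∧ y = b) → ¬(x = b ∧ y = a) →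
          D x y ∨ D y x := by
        intro x y h h1 h2
        exact (hor1 x y).mp ((hGadj x y).mpr ⟨h, h1, h2⟩)
      have hchild_a : ∀ c, D a c → D c b := by
        intro c hc
        have hca : c ≠ a := (hDne a c hc).symm
        have hcb : c ≠ b := fun h => hDab (h ▸ hc)
        rcases htot b c (Ne.symm hcb)
          (fun h => hab.symm h.1) (fun h => hca h.2) with h | h
        · exact absurd (hmor a b c hc h hab) hnadj
        · exact h
      have hchild_b : ∀ c, D b c → D c a := by
        intro c hc
        have hcb : c ≠ b := (hDne b c hc).symm
        have hca : c ≠ a := fun h => hDba (h ▸ hc)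
        rcases htot a c (Ne.symm hca)
          (fun h => hcb h.2) (fun h => hab h.1) with h | h
        · exact absurd ((hmor b a c hc h hab.symm).symm) hnadj
        · exact h
      have hsink : (∀ y, ¬ D b y) ∨ (∀ y, ¬ D a y) := by
        by_contra h
        push_neg at h
        obtain ⟨⟨c, hc⟩, ⟨c', hc'⟩⟩ := h
        exact hac a
          ((((Relation.TransGen.single hc').tail (hchild_a c' hc')).tail hc).tail
            (hchild_b c hc))
      have hfeq : ∀ (σ : Equiv.Perm (Fin p)), (∀ x y, D x y → σ x < σ y) →
          f σ = D := by
        intro σ hσ1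
        funext x y
        apply propext
        constructor
        · rintro ⟨hadj, hlt⟩
          have hne := hadj.ne
          rw [hGadj] at hadj
          obtain ⟨-, h1, h2⟩ := hadj
          rcases htot x y hne h1 h2 with h | h
          · exact h
          · exact absurd (hσ1 y x h) (lt_asymm hlt)
        · intro h
          exact ⟨hDadj x y h, hσ1 x y h⟩
      by_cases hb : ∀ y, ¬ D b y
      · obtain ⟨σ, hσ1, hσb⟩ := build_perm (by omega) D hac b hb
          (fun x y h h1 h2 => htot x y h (fun hh => h2 hh.2) (fun hh => h1 hh.1))
        exact ⟨σ, Or.inl hσb, hfeq σ hσ1⟩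
      · have ha : ∀ y, ¬ D a y := hsink.resolve_left hb
        obtain ⟨σ, hσ1, hσa⟩ := build_perm (by omega) D hac a ha
          (fun x y h h1 h2 => htot x y h (fun hh => h1 hh.1) (fun hh => h2 hh.2))
        push_neg at hb
        obtain ⟨c, hc⟩ := hb
        have hca : c ≠ a := fun h => hDba (h ▸ hc)
        have h1 : σ b < σ c := hσ1 _ _ hc
        have h2 : σ c < σ a := by
          refine lt_of_le_of_ne (hσa ▸ hmax (σ c)) (fun h => hca (σ.injective h))
        have hbne : σ b ≠ secF := by
          intro h
          rw [h] at h1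
          rw [hσa] at h2
          rw [Fin.lt_def] at h1 h2
          simp only [secF, lastF] at h1 h2
          omega
        exact ⟨σ, Or.inr ⟨hσa, hbne⟩, hfeq σ hσ1⟩
    · rintro ⟨σ, hσT, rfl⟩
      have hσinj := σ.injective
      refine ⟨⟨?_, ?_⟩, ?_, ?_⟩
      · intro x y
        constructor
        · intro hadj
          rcases lt_trichotomy (σ x) (σ y) with h | h | h
          · exact Or.inl ⟨hadj, h⟩
          · exact absurd (hσinj h) hadj.ne
          · exact Or.inr ⟨hadj.symm, h⟩
        · rintro (⟨h, -⟩ | ⟨h, -⟩)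
          · exact h
          · exact h.symm
      · rintro x y ⟨⟨-, h1⟩, ⟨-, h2⟩⟩
        exact lt_asymm h1 h2
      · intro x hx
        have hlt : ∀ u v, Relation.TransGen (f σ) u v → σ u < σ v := by
          intro u v h
          induction h with
          | single h => exact h.2
          | tail _ h ih => exact ih.trans h.2
        exact lt_irrefl _ (hlt x x hx)
      · rintro x y z ⟨-, h1⟩ ⟨-, h2⟩ hxy
        rw [hGadj]
        refine ⟨hxy, ?_, ?_⟩
        · rintro ⟨rfl, rfl⟩
          rcases hσT with h | ⟨h, -⟩
          · rw [h] at h2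
            exact absurd h2 (not_lt.mpr (hmax _))
          · rw [h] at h1
            exact absurd h1 (not_lt.mpr (hmax _))
        · rintro ⟨rfl, rfl⟩
          rcases hσT with h | ⟨h, -⟩
          · rw [h] at h1
            exact absurd h1 (not_lt.mpr (hmax _))
          · rw [h] at h2
            exact absurd h2 (not_lt.mpr (hmax _))
  have hkey : ∀ σ τ : Equiv.Perm (Fin p), σ ∈ T → τ ∈ T →
      (∀ u v, G.Adj u v → (σ u < σ v ↔ τ u < τ v)) →
      ∀ u v, σ u < σ v → τ u < τ v := by
    intro σ τ hσT hτT hiff u v hlt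
    have hne : u ≠ v := fun h => lt_irrefl _ (h ▸ hlt)
    by_cases hadj : G.Adj u v
    · exact (hiff u v hadj).mp hlt
    · have h' : ¬(u ≠ v ∧ ¬(u = a ∧ v = b) ∧ ¬(u = b ∧ v = a)) :=
        fun hh => hadj ((hGadj u v).mpr hh)
      have hcase : (u = a ∧ v = b) ∨ (u = b ∧ v = a) := by tauto
      rcases hcase with ⟨hu, hv⟩ | ⟨hu, hv⟩
      · rw [hu, hv] at hlt ⊢
        have hσb : σ b = lastF := by
          rcases hσT with h | ⟨h, -⟩
          · exact h
          · rw [h] at hlt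
            exact absurd hlt (not_lt.mpr (hmax _))
        rcases hτT with h | ⟨hτa, hτb⟩
        · rw [h]
          exact lt_of_le_of_ne (hmax _)
            (fun he => hab (τ.injective (he.trans h.symm)))
        · exfalso
          set c := τ.symm secF with hcdef
          have hτc : τ c = secF := τ.apply_symm_apply secF
          have hca : c ≠ a := fun h => hls (by rw [h, hτa] at hτc; exact hτc.symm)
          have hcb : c ≠ b := fun h => hτb (h ▸ hτc)
          have hadjbc : G.Adj b c :=
            (hGadj b c).mpr ⟨Ne.symm hcb, fun h => hab.symm h.1, fun h => hca h.2⟩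
          have hτbc : τ b < τ c := by
            have h1 : τ b ≠ lastF := fun h => hab (τ.injective (hτa.trans h.symm))
            have hv1 : (τ b).val ≠ p - 1 := fun h => h1 (Fin.ext h)
            have hv2 : (τ b).val ≠ p - 2 := fun h => hτb (Fin.ext h)
            have hvb := (τ b).2
            rw [hτc, Fin.lt_def]
            simp only [secF]
            omega
          have hσbc := (hiff b c hadjbc).mpr hτbc
          rw [hσb] at hσbc
          exact absurd hσbc (not_lt.mpr (hmax _))
      · rw [hu, hv] at hlt ⊢
        have hσa2 : σ a = lastF ∧ σ b ≠ secF := by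
          rcases hσT with h | h
          · rw [h] at hlt
            exact absurd hlt (not_lt.mpr (hmax _))
          · exact h
        obtain ⟨hσa, hσbne⟩ := hσa2
        rcases hτT with h | ⟨hτa, -⟩
        · exfalso
          set c := σ.symm secF with hcdef
          have hσc : σ c = secF := σ.apply_symm_apply secF
          have hca : c ≠ a := fun hh => hls (by rw [hh, hσa] at hσc; exact hσc.symm)
          have hcb : c ≠ b := fun hh => hσbne (hh ▸ hσc)
          have hadjbc : G.Adj b c :=
            (hGadj b c).mpr ⟨Ne.symm hcb, fun hh => hab.symm hh.1, fun hh => hca hh.2⟩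
          have hσbc : σ b < σ c := by
            have h1 : σ b ≠ lastF := fun hh => hab (σ.injective (hσa.trans hh.symm))
            have hv1 : (σ b).val ≠ p - 1 := fun hh => h1 (Fin.ext hh)
            have hv2 : (σ b).val ≠ p - 2 := fun hh => hσbne (Fin.ext hh)
            have hvb := (σ b).2
            rw [hσc, Fin.lt_def]
            simp only [secF]
            omega
          have hτbc := (hiff b c hadjbc).mp hσbc
          rw [h] at hτbc
          exact absurd hτbc (not_lt.mpr (hmax _))
        · rw [hτa]
          exact lt_of_le_of_ne (hmax _)
            (fun he => hab.symm (τ.injective (he.trans hτa.symm)))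
  have hinj : Set.InjOn f T := by
    intro σ hσT τ hτT hfeq
    have hiff : ∀ u v, G.Adj u v → (σ u < σ v ↔ τ u < τ v) := by
      intro u v h
      have h1 : f σ u v = f τ u v := congrFun (congrFun hfeq u) v
      have h2 : (G.Adj u v ∧ σ u < σ v) ↔ (G.Adj u v ∧ τ u < τ v) := iff_of_eq h1
      exact ⟨fun hlt => (h2.mp ⟨h, hlt⟩).2, fun hlt => (h2.mpr ⟨h, hlt⟩).2⟩
    have hdir1 := hkey σ τ hσT hτT hiff
    have hdir2 := hkey τ σ hτT hσT (fun u v h => (hiff u v h).symm)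
    let π : Fin p ≃ Fin p := σ.symm.trans τ
    have hπmono : StrictMono π := by
      intro i j hij
      have h1 : σ (σ.symm i) < σ (σ.symm j) := by
        rw [σ.apply_symm_apply, σ.apply_symm_apply]
        exact hij
      exact hdir1 _ _ h1
    let e : Fin p ≃o Fin p :=
      StrictMono.orderIsoOfSurjective π hπmono π.surjective
    have he : e = OrderIso.refl (Fin p) := Subsingleton.elim _ _
    have hid : ∀ i, π i = i := by
      intro i
      have h1 : e i = π i := rfl
      rw [← h1, he]
      rfl
    apply Equiv.ext
    intro x
    have h2 := hid (σ x)
    simp only [π, Equiv.trans_apply, Equiv.symm_apply_apply] at h2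
    exact h2.symm
  rw [moralAcyclicCount, hST, Set.ncard_image_of_injOn hinj]
  have hT : T = ↑(Finset.univ.filter
      (fun σ : Equiv.Perm (Fin p) => σ b = lastF ∨ (σ a = lastF ∧ σ b ≠ secF))) := by
    ext σ
    simp [T]
  rw [hT, Set.ncard_coe_finset, Finset.filter_or]
  have hdisj : Disjoint
      (Finset.univ.filter (fun σ : Equiv.Perm (Fin p) => σ b = lastF))
      (Finset.univ.filter
        (fun σ : Equiv.Perm (Fin p) => σ a = lastF ∧ σ b ≠ secF)) := by
    rw [Finset.disjoint_left]
    intro σ h1 h2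
    rw [Finset.mem_filter] at h1 h2
    exact hab (σ.injective (h2.2.1.trans h1.2.symm))
  rw [Finset.card_union_of_disjoint hdisj]
  have c1 : (Finset.univ.filter
      (fun σ : Equiv.Perm (Fin p) => σ b = lastF)).card = (p - 1).factorial := by
    rw [← Fintype.card_subtype, card_perm_one b lastF, Fintype.card_fin]
  have c2 : (Finset.univ.filter
      (fun σ : Equiv.Perm (Fin p) => σ a = lastF)).card = (p - 1).factorial := by
    rw [← Fintype.card_subtype, card_perm_one a lastF, Fintype.card_fin]
  have c3 : (Finset.univ.filter
      (fun σ : Equiv.Perm (Fin p) => σ a = lastF ∧ σ b = secF)).card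
      = (p - 2).factorial := by
    rw [← Fintype.card_subtype, card_perm_two hab (Ne.symm hls), Fintype.card_fin]
  have c4 : (Finset.univ.filter
      (fun σ : Equiv.Perm (Fin p) => σ a = lastF ∧ σ b ≠ secF)).card
      = (p - 1).factorial - (p - 2).factorial := by
    have h5 : (Finset.univ.filter
        (fun σ : Equiv.Perm (Fin p) => σ a = lastF ∧ σ b ≠ secF))
        = (Finset.univ.filter (fun σ : Equiv.Perm (Fin p) => σ a = lastF)) \
          (Finset.univ.filter
            (fun σ : Equiv.Perm (Fin p) => σ a = lastF ∧ σ b = secF)) := by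
      ext σ
      simp only [Finset.mem_filter, Finset.mem_sdiff, Finset.mem_univ, true_and]
      tauto
    have hsub : (Finset.univ.filter
        (fun σ : Equiv.Perm (Fin p) => σ a = lastF ∧ σ b = secF)) ⊆
        (Finset.univ.filter (fun σ : Equiv.Perm (Fin p) => σ a = lastF)) := by
      intro σ h
      simp only [Finset.mem_filter, Finset.mem_univ, true_and] at h ⊢
      exact h.1
    rw [h5, Finset.card_sdiff_of_subset hsub, c2, c3]
  rw [c1, c4]
  have hle : (p - 2).factorial ≤ (p - 1).factorial :=
    Nat.factorial_le (by omega)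
  omega
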